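/- Let A be a ℚ-vector space and n ≥ 2. Every μ ∈ 𝓜_n(A) decomposes uniquely as μ = ν + ι_n(Φ), where ν ∈ 𝓜_{n−1}(A) and Φ ∈ Σ_n(A); explicitly Φ = Π_n(μ) and ν = μ − ι_n(Π_n(μ)). Consequently 𝓜_n(A) ≅ 𝓜_{n−1}(A) ⊕ Σ_n(A) as complex vector spaces, and the short exact sequence 0 → 𝓜_{n−1}(A) → 𝓜_n(A) → Σ_n(A) → 0 splits via ι_n. -/

import Mathlib

open Finset

/-- The `k`-th interference functional of `μ`:
`I^μ_k(a₁,…,a_k) = Σ_S (−1)^{k−|S|} μ(Σ_{i∈S} a_i)`, where `S` ranges over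
non-empty subsets of `{1,…,k}`. -/
noncomputable def interference {A : Type*} [AddCommGroup A] (μ : A → ℂ) {k : ℕ}
    (a : Fin k → A) : ℂ :=
  ∑ S ∈ (Finset.univ : Finset (Fin k)).powerset.filter (fun S => S.Nonempty),
    (-1 : ℂ) ^ (k - S.card) * μ (∑ i ∈ S, a i)

/-- `μ ∈ 𝓜_n(A)`: the order-`n` sum rule
`μ(a₁+⋯+a_{n+1}) = Σ_S (−1)^{n−|S|} μ(Σ_{i∈S} a_i)`, with `S` running over the
subsets of `{1,…,n+1}` satisfying `1 ≤ |S| ≤ n`. -/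
def MemMeasureSpace {A : Type*} [AddCommGroup A] (n : ℕ) (μ : A → ℂ) : Prop :=
  ∀ a : Fin (n + 1) → A,
    μ (∑ i, a i) =
      ∑ S ∈ (Finset.univ : Finset (Fin (n + 1))).powerset.filter
          (fun S => S.Nonempty ∧ S.card ≤ n),
        (-1 : ℂ) ^ (n - S.card) * μ (∑ i ∈ S, a i)

/-- Total symmetry of a functional of `n` arguments. -/
def IsTotallySymmetric {A : Type*} {n : ℕ} (Φ : (Fin n → A) → ℂ) : Prop :=
  ∀ (σ : Equiv.Perm (Fin n)) (a : Fin n → A), Φ (a ∘ σ) = Φ a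

/-- Additivity in each argument of a functional of `n` arguments. -/
def IsMultiadditive {A : Type*} [AddCommGroup A] {n : ℕ} (Φ : (Fin n → A) → ℂ) : Prop :=
  ∀ (i : Fin n) (a : Fin n → A) (x y : A),
    Φ (Function.update a i (x + y)) =
      Φ (Function.update a i x) + Φ (Function.update a i y)

/-- The polarization map
`Π_n(μ)(a₁,…,a_n) = (1/(2ⁿ n!)) Σ_{z∈{1,−1}ⁿ} z₁⋯z_n · μ(z₁a₁+⋯+z_n a_n)`,
the sum running over all sign choices `z ∈ {1,−1}ⁿ`. -/
noncomputable def polarization {A : Type*} [AddCommGroup A] (μ : A → ℂ) {n : ℕ}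
    (a : Fin n → A) : ℂ :=
  (1 / (2 ^ n * n.factorial : ℂ)) *
    ∑ z : Fin n → Bool,
      (∏ i, if z i then (1 : ℂ) else -1) * μ (∑ i, if z i then a i else -a i)

section Aux

variable {A : Type*} [AddCommGroup A]

/-- Full difference functional, over all subsets including the empty set. -/
noncomputable def dd (μ : A → ℂ) {k : ℕ} (a : Fin k → A) : ℂ :=
  ∑ S ∈ (univ : Finset (Fin k)).powerset, (-1 : ℂ) ^ (k - S.card) * μ (∑ i ∈ S, a i)

lemma neg_one_pow_sub_c {c k : ℕ} (h : c ≤ k) : (-1 : ℂ) ^ (k - c) = (-1) ^ k * (-1) ^ c := by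
  have h1 : (-1 : ℂ) ^ (k - c) * (-1) ^ c = (-1) ^ k := by
    rw [← pow_add, Nat.sub_add_cancel h]
  have h2 : ((-1 : ℂ) ^ c) * ((-1) ^ c) = 1 := by
    rw [← pow_add, ← two_mul, pow_mul]; norm_num
  calc (-1:ℂ)^(k-c) = (-1:ℂ)^(k-c) * (((-1:ℂ)^c) * ((-1)^c)) := by rw [h2, mul_one]
    _ = (-1)^k * (-1)^c := by rw [← mul_assoc, h1]

lemma sum_powerset_map {α β : Type*} (f : α ↪ β) (s : Finset α) (g : Finset β → ℂ) :
    ∑ S ∈ (s.map f).powerset, g S = ∑ T ∈ s.powerset, g (T.map f) := by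
  refine (Finset.sum_bij (fun T _ => T.map f) ?_ ?_ ?_ ?_).symm
  · intro T hT
    exact mem_powerset.2 (Finset.map_subset_map.2 (mem_powerset.1 hT))
  · intro T1 h1 T2 h2 h
    exact Finset.map_injective f h
  · intro S hS
    simp only [mem_powerset] at hS
    obtain ⟨u, hu, rfl⟩ := Finset.subset_map_iff.1 hS
    exact ⟨u, mem_powerset.2 hu, rfl⟩
  · intros; rfl

lemma dd_snoc (μ : A → ℂ) {k : ℕ} (a : Fin k → A) (c : A) :
    dd μ (Fin.snoc a c) = dd (fun x => μ (x + c)) a - dd μ a := by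
  classical
  have hlast : Fin.last k ∉ (univ : Finset (Fin k)).map Fin.castSuccEmb := by
    simp only [Finset.mem_map, mem_univ, true_and]
    rintro ⟨t, ht⟩
    exact (Fin.castSucc_lt_last t).ne ht
  have huniv : (univ : Finset (Fin (k+1)))
      = insert (Fin.last k) ((univ : Finset (Fin k)).map Fin.castSuccEmb) := by
    rw [Fin.univ_castSuccEmb, Finset.cons_eq_insert]
  have hsum : ∀ T : Finset (Fin k), ∑ i ∈ T.map Fin.castSuccEmb, Fin.snoc a c i = ∑ i ∈ T, a i := by
    intro T
    rw [Finset.sum_map]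
    exact Finset.sum_congr rfl fun t _ => by rw [Fin.coe_castSuccEmb, Fin.snoc_castSucc]
  rw [dd, huniv, Finset.sum_powerset_insert hlast, sum_powerset_map, sum_powerset_map]
  have e1 : ∀ T ∈ (univ : Finset (Fin k)).powerset,
      (-1:ℂ) ^ (k + 1 - (T.map Fin.castSuccEmb).card) * μ (∑ i ∈ T.map Fin.castSuccEmb, (Fin.snoc a c : Fin (k+1) → A) i)
      = -((-1:ℂ) ^ (k - T.card) * μ (∑ i ∈ T, a i)) := by
    intro T hT
    have hc : T.card ≤ k := le_trans (card_le_card (mem_powerset.1 hT)) (by simp)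
    have : k + 1 - (T.map Fin.castSuccEmb).card = (k - T.card) + 1 := by
      rw [Finset.card_map]; omega
    rw [hsum, this, pow_succ]
    ring
  have e2 : ∀ T ∈ (univ : Finset (Fin k)).powerset,
      (-1:ℂ) ^ (k + 1 - (insert (Fin.last k) (T.map Fin.castSuccEmb)).card)
        * μ (∑ i ∈ insert (Fin.last k) (T.map Fin.castSuccEmb), (Fin.snoc a c : Fin (k+1) → A) i)
      = (-1:ℂ) ^ (k - T.card) * μ ((∑ i ∈ T, a i) + c) := by
    intro T hT
    have hmem : Fin.last k ∉ T.map Fin.castSuccEmb := by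
      intro hmem
      exact hlast (Finset.map_subset_map.2 (mem_powerset.1 hT) hmem)
    rw [Finset.card_insert_of_notMem hmem, Finset.sum_insert hmem, Finset.card_map,
      hsum, Fin.snoc_last]
    have : k + 1 - (T.card + 1) = k - T.card := by omega
    rw [this, add_comm c]
  rw [Finset.sum_congr rfl e1, Finset.sum_congr rfl e2, Finset.sum_neg_distrib]
  unfold dd
  ring

lemma dd_perm (μ : A → ℂ) {k : ℕ} (σ : Equiv.Perm (Fin k)) (a : Fin k → A) :
    dd μ (a ∘ σ) = dd μ a := by
  unfold dd
  refine Finset.sum_bij (fun S _ => S.image σ) ?_ ?_ ?_ ?_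
  · intro S _; simp
  · intro S1 _ S2 _ h
    have := congrArg (Finset.image σ.symm) h
    simpa [Finset.image_image, Function.comp_def] using this
  · intro S _
    refine ⟨S.image σ.symm, by simp, ?_⟩
    simp [Finset.image_image, Function.comp_def]
  · intro S _
    rw [Finset.card_image_of_injective _ σ.injective, Finset.sum_image
      (fun x _ y _ h => σ.injective h)]
    rfl

lemma dd_sub (f g : A → ℂ) {k : ℕ} (a : Fin k → A) :
    dd (fun x => f x - g x) a = dd f a - dd g a := by
  unfold dd
  rw [← Finset.sum_sub_distrib]
  exact Finset.sum_congr rfl fun S _ => by ring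

lemma dd_add (f g : A → ℂ) {k : ℕ} (a : Fin k → A) :
    dd (fun x => f x + g x) a = dd f a + dd g a := by
  unfold dd
  rw [← Finset.sum_add_distrib]
  exact Finset.sum_congr rfl fun S _ => by ring

lemma dd_shift (μ : A → ℂ) {k : ℕ} (h : ∀ b : Fin (k+1) → A, dd μ b = 0) (c : A)
    (a : Fin k → A) : dd (fun x => μ (x + c)) a = dd μ a := by
  have := h (Fin.snoc a c)
  rw [dd_snoc] at this
  exact sub_eq_zero.1 this

lemma dd_shift_add (μ : A → ℂ) {k : ℕ} (h : ∀ b : Fin (k+2) → A, dd μ b = 0)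
    (x y : A) (a : Fin k → A) :
    dd (fun t => μ (t + (x + y))) a + dd μ a
      = dd (fun t => μ (t + x)) a + dd (fun t => μ (t + y)) a := by
  have h1 : dd (fun t => μ (t + y)) (Fin.snoc a x) = dd μ (Fin.snoc a x) :=
    dd_shift μ h y (Fin.snoc a x)
  rw [dd_snoc, dd_snoc] at h1
  have e : (fun t => μ (t + y + x)) = (fun t => μ (t + (x + y))) := by
    funext t; rw [add_assoc, add_comm y x]
  rw [show (fun t => (fun t' => μ (t' + y)) (t + x)) = fun t => μ (t + x + y) from rfl] at h1
  have e2 : (fun t => μ (t + x + y)) = (fun t => μ (t + (x + y))) := by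
    funext t; rw [add_assoc]
  rw [e2] at h1
  linear_combination h1

lemma dd_addLast (μ : A → ℂ) {k : ℕ} (h : ∀ b : Fin (k+2) → A, dd μ b = 0)
    (a : Fin k → A) (x y : A) :
    dd μ (Fin.snoc a (x + y)) = dd μ (Fin.snoc a x) + dd μ (Fin.snoc a y) := by
  rw [dd_snoc, dd_snoc, dd_snoc]
  linear_combination dd_shift_add μ h x y a

omit [AddCommGroup A] in
lemma update_last_eq_snoc {k : ℕ} (b : Fin (k+1) → A) (z : A) :
    Function.update b (Fin.last k) z = Fin.snoc (Fin.init b) z := by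
  funext i
  refine Fin.lastCases ?_ (fun t => ?_) i
  · rw [Function.update_self, Fin.snoc_last]
  · rw [Function.update_of_ne (Fin.castSucc_lt_last t).ne, Fin.snoc_castSucc]
    rfl

lemma dd_multiadd (μ : A → ℂ) {k : ℕ} (h : ∀ b : Fin (k+2) → A, dd μ b = 0) :
    IsMultiadditive (fun a : Fin (k+1) → A => dd μ a) := by
  intro i a x y
  simp only []
  set σ : Equiv.Perm (Fin (k+1)) := Equiv.swap i (Fin.last k) with hσdef
  have hσ : σ.symm i = Fin.last k := by
    rw [hσdef, Equiv.symm_swap, Equiv.swap_apply_left]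
  have key : ∀ z : A, dd μ (Function.update a i z)
      = dd μ (Fin.snoc (Fin.init (a ∘ σ)) z) := by
    intro z
    rw [← dd_perm μ σ (Function.update a i z), Function.update_comp_equiv, hσ,
      update_last_eq_snoc]
  rw [key, key, key]
  exact dd_addLast μ h _ x y

lemma multiadd_partial {k : ℕ} {Φ : (Fin k → A) → ℂ} (h : IsMultiadditive Φ)
    (a : Fin k → A) (T : Finset (Fin k)) :
    Φ (fun i => if i ∈ T then a i + a i else a i) = 2 ^ T.card * Φ a := by
  classical
  induction T using Finset.induction_on with
  | empty => simp
  | @insert j T hj ih =>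
    have hfun : (fun i => if i ∈ insert j T then a i + a i else a i)
        = Function.update (fun i => if i ∈ T then a i + a i else a i) j (a j + a j) := by
      funext i
      by_cases hij : i = j
      · subst hij; simp [hj]
      · rw [Function.update_of_ne hij]
        simp [Finset.mem_insert, hij]
    have hupd : Function.update (fun i => if i ∈ T then a i + a i else a i) j (a j)
        = (fun i => if i ∈ T then a i + a i else a i) := by
      nth_rewrite 1 [show a j = (fun i => if i ∈ T then a i + a i else a i) j from by simp [hj]]
      exact Function.update_eq_self _ _
    rw [hfun, h j _ (a j) (a j), hupd, ih, Finset.card_insert_of_notMem hj, pow_succ]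
    ring

lemma multiadd_double {k : ℕ} {Φ : (Fin k → A) → ℂ} (h : IsMultiadditive Φ)
    (a : Fin k → A) : Φ (fun i => a i + a i) = 2 ^ k * Φ a := by
  have := multiadd_partial h a univ
  simpa using this

lemma multiadd_zero {k : ℕ} {Φ : (Fin (k+1) → A) → ℂ} (h : IsMultiadditive Φ)
    (a : Fin (k+1) → A) (i : Fin (k+1)) (hi : a i = 0) : Φ a = 0 := by
  have h1 := h i a 0 0
  rw [add_zero] at h1
  have h2 : Function.update a i 0 = a := by rw [← hi]; exact Function.update_eq_self _ _
  rw [h2] at h1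
  linear_combination -h1

lemma dd_split (μ : A → ℂ) {k : ℕ} (a : Fin (k+1) → A) :
    dd μ a = (-1:ℂ)^(k+1) * μ 0 + μ (∑ i, a i)
      - ∑ S ∈ (univ : Finset (Fin (k+1))).powerset.filter
          (fun S => S.Nonempty ∧ S.card ≤ k),
        (-1:ℂ)^(k - S.card) * μ (∑ i ∈ S, a i) := by
  classical
  rw [dd, ← Finset.sum_filter_add_sum_filter_not ((univ : Finset (Fin (k+1))).powerset)
    (fun S => S.Nonempty ∧ S.card ≤ k)]
  have h1 : ∑ S ∈ (univ : Finset (Fin (k+1))).powerset.filter (fun S => S.Nonempty ∧ S.card ≤ k),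
      (-1:ℂ)^(k + 1 - S.card) * μ (∑ i ∈ S, a i)
      = - ∑ S ∈ (univ : Finset (Fin (k+1))).powerset.filter (fun S => S.Nonempty ∧ S.card ≤ k),
      (-1:ℂ)^(k - S.card) * μ (∑ i ∈ S, a i) := by
    rw [← Finset.sum_neg_distrib]
    refine Finset.sum_congr rfl fun S hS => ?_
    have hc : S.card ≤ k := (Finset.mem_filter.1 hS).2.2
    have : k + 1 - S.card = (k - S.card) + 1 := by omega
    rw [this, pow_succ]; ring
  have h2 : (univ : Finset (Fin (k+1))).powerset.filter (fun S => ¬(S.Nonempty ∧ S.card ≤ k))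
      = {∅, (univ : Finset (Fin (k+1)))} := by
    ext S
    simp only [Finset.mem_filter, Finset.mem_powerset, Finset.mem_insert, Finset.mem_singleton,
      not_and_or, Finset.not_nonempty_iff_eq_empty, not_le]
    constructor
    · rintro ⟨hsub, h | h⟩
      · exact Or.inl h
      · refine Or.inr ?_
        have hle : S.card ≤ k + 1 := by
          simpa using Finset.card_le_card hsub
        have hcc : S.card = Fintype.card (Fin (k+1)) := by simp; omega
        rwa [Finset.card_eq_iff_eq_univ] at hcc
    · rintro (rfl | rfl)
      · exact ⟨Finset.empty_subset _, Or.inl rfl⟩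
      · exact ⟨le_refl _, Or.inr (by simp)⟩
  have hne : (∅ : Finset (Fin (k+1))) ≠ univ := by
    simp [Finset.eq_univ_iff_forall]
  rw [h1, h2, Finset.sum_pair hne]
  simp only [Finset.card_empty, Finset.sum_empty, Finset.card_univ, Fintype.card_fin,
    Nat.sub_zero, Nat.sub_self, pow_zero, one_mul]
  ring

lemma sum_signs_zero {k : ℕ} :
    ∑ S ∈ (univ : Finset (Fin (k+1))).powerset, (-1:ℂ)^(k + 1 - S.card) = 0 := by
  classical
  have hz : (∑ S ∈ (univ : Finset (Fin (k+1))).powerset, (-1:ℤ)^(S.card)) = 0 :=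
    Finset.sum_powerset_neg_one_pow_card_of_nonempty Finset.univ_nonempty
  have hzc : (∑ S ∈ (univ : Finset (Fin (k+1))).powerset, (-1:ℂ)^(S.card)) = 0 := by
    have := congrArg (Int.cast : ℤ → ℂ) hz
    push_cast at this
    exact this
  calc ∑ S ∈ (univ : Finset (Fin (k+1))).powerset, (-1:ℂ)^(k + 1 - S.card)
      = ∑ S ∈ (univ : Finset (Fin (k+1))).powerset, (-1:ℂ)^(k+1) * (-1)^(S.card) := by
        refine Finset.sum_congr rfl fun S hS => ?_
        refine neg_one_pow_sub_c ?_
        simpa using Finset.card_le_card (Finset.mem_powerset.1 hS)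
    _ = (-1:ℂ)^(k+1) * ∑ S ∈ (univ : Finset (Fin (k+1))).powerset, (-1:ℂ)^(S.card) := by
        rw [Finset.mul_sum]
    _ = 0 := by rw [hzc, mul_zero]

lemma dd_const_zero (μ : A → ℂ) {k : ℕ} :
    dd μ (fun _ : Fin (k+1) => (0:A)) = 0 := by
  have : dd μ (fun _ : Fin (k+1) => (0:A))
      = (∑ S ∈ (univ : Finset (Fin (k+1))).powerset, (-1:ℂ)^(k + 1 - S.card)) * μ 0 := by
    rw [dd, Finset.sum_mul]
    exact Finset.sum_congr rfl fun S _ => by simp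
  rw [this, sum_signs_zero, zero_mul]

lemma mem_zero {k : ℕ} {μ : A → ℂ} (h : MemMeasureSpace k μ) : μ 0 = 0 := by
  have h1 := dd_split μ (fun _ : Fin (k+1) => (0:A))
  rw [dd_const_zero, ← h (fun _ => (0:A))] at h1
  have h2 : (0:ℂ) = (-1:ℂ)^(k+1) * μ 0 := by linear_combination h1
  have h3 : ((-1:ℂ)^(k+1)) ≠ 0 := pow_ne_zero _ (by norm_num)
  field_simp at h2
  exact (mul_eq_zero.1 h2.symm).resolve_left h3

lemma mem_dd {k : ℕ} {μ : A → ℂ} (h : MemMeasureSpace k μ) (a : Fin (k+1) → A) :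
    dd μ a = 0 := by
  rw [dd_split, mem_zero h, ← h a]
  ring

lemma mem_of_dd {k : ℕ} {μ : A → ℂ} (h0 : μ 0 = 0)
    (h : ∀ a : Fin (k+1) → A, dd μ a = 0) : MemMeasureSpace k μ := by
  intro a
  have h1 := dd_split μ a
  rw [h a, h0] at h1
  linear_combination -h1

lemma polarization_eq (μ : A → ℂ) {k : ℕ}
    (h : ∀ b : Fin (k+2) → A, dd μ b = 0) (a : Fin (k+1) → A) :
    polarization μ a = ((k+1).factorial : ℂ)⁻¹ * dd μ a := by
  classical
  have key : ∑ z : Fin (k+1) → Bool,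
      (∏ i, if z i then (1 : ℂ) else -1) * μ (∑ i, if z i then a i else -a i)
      = 2 ^ (k+1) * dd μ a := by
    have hbij : Function.Bijective
        (fun z : Fin (k+1) → Bool => (univ.filter (fun i => z i = true) : Finset (Fin (k+1)))) := by
      rw [Fintype.bijective_iff_injective_and_card]
      constructor
      · intro z z' hzz
        have hzz' : (univ.filter (fun i => z i = true) : Finset (Fin (k+1)))
            = univ.filter (fun i => z' i = true) := hzz
        funext i
        have : (i ∈ univ.filter (fun i => z i = true)) ↔
            (i ∈ univ.filter (fun i => z' i = true)) := by rw [hzz']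
        simp only [Finset.mem_filter, Finset.mem_univ, true_and] at this
        cases hz : z i <;> cases hz' : z' i <;> simp_all
      · simp [Fintype.card_finset]
    have step1 : ∑ z : Fin (k+1) → Bool,
        (∏ i, if z i then (1 : ℂ) else -1) * μ (∑ i, if z i then a i else -a i)
        = ∑ S : Finset (Fin (k+1)),
          (-1:ℂ) ^ (k + 1 - S.card) * μ ((-∑ i, a i) + ∑ i ∈ S, (a i + a i)) := by
      refine Fintype.sum_bijective _ hbij _ _ fun z => ?_
      set S := (univ.filter (fun i => z i = true) : Finset (Fin (k+1))) with hS
      have hprod : (∏ i, if z i then (1 : ℂ) else -1) = (-1:ℂ) ^ (k + 1 - S.card) := by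
        rw [← Finset.prod_filter_mul_prod_filter_not univ (fun i => z i = true)]
        have p1 : ∏ i ∈ univ.filter (fun i => z i = true), (if z i then (1:ℂ) else -1) = 1 := by
          refine Finset.prod_eq_one fun i hi => ?_
          rw [if_pos (by simpa using (Finset.mem_filter.1 hi).2)]
        have p2 : ∏ i ∈ univ.filter (fun i => ¬(z i = true)), (if z i then (1:ℂ) else -1)
            = (-1:ℂ) ^ (k + 1 - S.card) := by
          rw [Finset.prod_congr rfl (fun i hi => by
            rw [if_neg (by simpa using (Finset.mem_filter.1 hi).2)] :
            ∀ i ∈ univ.filter (fun i => ¬(z i = true)), (if z i then (1:ℂ) else -1) = -1),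
            Finset.prod_const]
          congr 1
          rw [Finset.filter_not, Finset.card_sdiff_of_subset (Finset.filter_subset _ _)]
          simp [hS]
        rw [p1, p2, one_mul]
      have hsum : (∑ i, if z i then a i else -a i)
          = (-∑ i, a i) + ∑ i ∈ S, (a i + a i) := by
        have e1 : ∑ i ∈ univ.filter (fun i => z i = true), (if z i then a i else -a i)
            = ∑ i ∈ univ.filter (fun i => z i = true), a i :=
          Finset.sum_congr rfl fun i hi => if_pos (by simpa using (Finset.mem_filter.1 hi).2)
        have e2 : ∑ i ∈ univ.filter (fun i => ¬(z i = true)), (if z i then a i else -a i)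
            = ∑ i ∈ univ.filter (fun i => ¬(z i = true)), -a i :=
          Finset.sum_congr rfl fun i hi => if_neg (by simpa using (Finset.mem_filter.1 hi).2)
        rw [← Finset.sum_filter_add_sum_filter_not univ (fun i => z i = true)
          (fun i => if z i then a i else -a i),
          ← Finset.sum_filter_add_sum_filter_not univ (fun i => z i = true) a,
          e1, e2, Finset.sum_neg_distrib, Finset.sum_add_distrib]
        abel
      rw [hprod, hsum]
    rw [step1]
    have step2 : ∑ S : Finset (Fin (k+1)),
        (-1:ℂ) ^ (k + 1 - S.card) * μ ((-∑ i, a i) + ∑ i ∈ S, (a i + a i))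
        = dd (fun x => μ (x + (-∑ i, a i))) (fun i => a i + a i) := by
      rw [dd, Finset.powerset_univ]
      refine Finset.sum_congr rfl fun S _ => ?_
      rw [add_comm (-∑ i, a i) (∑ i ∈ S, (a i + a i))]
    rw [step2, dd_shift μ h, multiadd_double (dd_multiadd μ h) a]
  rw [polarization, key]
  have h2 : ((2:ℂ) ^ (k+1)) ≠ 0 := pow_ne_zero _ two_ne_zero
  have hf : (((k+1).factorial : ℂ)) ≠ 0 := Nat.cast_ne_zero.2 (Nat.factorial_ne_zero _)
  field_simp
lemma update_irrel {ι : Type*} {β : ι → Type*} (d1 d2 : DecidableEq ι)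
    (f : ∀ i, β i) (i : ι) (x : β i) :
    @Function.update ι β d1 f i x = @Function.update ι β d2 f i x := by
  funext j
  unfold Function.update
  congr

lemma multiadd_zsmul {n : ℕ} {Φ : (Fin n → A) → ℂ} (hm : IsMultiadditive Φ)
    (m : Fin n → A) (i : Fin n) (c : ℤ) (x : A) :
    Φ (Function.update m i (c • x)) = c • Φ (Function.update m i x) := by
  let g : A →+ ℂ := AddMonoidHom.mk' (fun t => Φ (Function.update m i t))
    (fun u v => hm i m u v)
  exact map_zsmul g c x

/-- Pack a multiadditive functional into a `ℤ`-multilinear map. -/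
noncomputable def toML {n : ℕ} (Φ : (Fin n → A) → ℂ) (hm : IsMultiadditive Φ) :
    MultilinearMap ℤ (fun _ : Fin n => A) ℂ where
  toFun := Φ
  map_update_add' := by
    intro d m i x y
    rw [update_irrel d (instDecidableEqFin n) m i (x + y),
      update_irrel d (instDecidableEqFin n) m i x,
      update_irrel d (instDecidableEqFin n) m i y]
    exact hm i m x y
  map_update_smul' := by
    intro d m i c x
    rw [update_irrel d (instDecidableEqFin n) m i (c • x),
      update_irrel d (instDecidableEqFin n) m i x]
    exact multiadd_zsmul hm m i c x

@[simp] lemma toML_apply {n : ℕ} (Φ : (Fin n → A) → ℂ) (hm : IsMultiadditive Φ)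
    (v : Fin n → A) : toML Φ hm v = Φ v := rfl

lemma dd_diag {n : ℕ} {Φ : (Fin n → A) → ℂ} (hs : IsTotallySymmetric Φ)
    (hm : IsMultiadditive Φ) (a : Fin n → A) :
    dd (fun x => Φ (fun _ => x)) a = (n.factorial : ℂ) * Φ a := by
  classical
  have expand : ∀ S : Finset (Fin n), Φ (fun _ => ∑ i ∈ S, a i)
      = ∑ r ∈ Fintype.piFinset (fun _ : Fin n => S), Φ (fun j => a (r j)) := by
    intro S
    have := (toML Φ hm).map_sum_finset (fun _ j => a j) (fun _ => S)
    simpa using this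
  rw [dd]
  calc ∑ S ∈ (univ : Finset (Fin n)).powerset, (-1:ℂ)^(n - S.card) * Φ (fun _ => ∑ i ∈ S, a i)
      = ∑ S ∈ (univ : Finset (Fin n)).powerset, ∑ r : Fin n → Fin n,
          (if (∀ i, r i ∈ S) then (-1:ℂ)^(n - S.card) * Φ (fun j => a (r j)) else 0) := by
        refine Finset.sum_congr rfl fun S _ => ?_
        rw [expand, Finset.mul_sum]
        have hpi : Fintype.piFinset (fun _ : Fin n => S)
            = univ.filter (fun r : Fin n → Fin n => ∀ i, r i ∈ S) := by
          ext r
          simp [Fintype.mem_piFinset]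
        rw [hpi, Finset.sum_filter]
    _ = ∑ r : Fin n → Fin n, ∑ S ∈ (univ : Finset (Fin n)).powerset,
          (if (∀ i, r i ∈ S) then (-1:ℂ)^(n - S.card) * Φ (fun j => a (r j)) else 0) :=
        Finset.sum_comm
    _ = ∑ r : Fin n → Fin n,
          (if Finset.image r univ = univ then Φ (fun j => a (r j)) else 0) := by
        refine Finset.sum_congr rfl fun r _ => ?_
        have hiff : ∀ S : Finset (Fin n), (∀ i, r i ∈ S) ↔ Finset.image r univ ⊆ S := by
          intro S
          rw [Finset.image_subset_iff]
          simp
        rw [Finset.sum_congr rfl (fun S _ => by rw [if_congr (hiff S) rfl rfl] :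
          ∀ S ∈ (univ : Finset (Fin n)).powerset, _ = (if Finset.image r univ ⊆ S
            then (-1:ℂ)^(n - S.card) * Φ (fun j => a (r j)) else 0))]
        rw [← Finset.sum_filter]
        -- now the inclusion-exclusion
        set R := Finset.image r univ with hR
        have hfil : ∑ S ∈ ((univ : Finset (Fin n)).powerset).filter (fun S => R ⊆ S),
            (-1:ℂ)^(n - S.card) * Φ (fun j => a (r j))
            = (∑ T ∈ ((univ : Finset (Fin n)) \ R).powerset,
                (-1:ℂ)^(n - (T.card + R.card))) * Φ (fun j => a (r j)) := by
          rw [Finset.sum_mul]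
          refine Finset.sum_bij (fun S _ => S \ R) ?_ ?_ ?_ ?_
          · intro S hS
            simp only [Finset.mem_filter, Finset.mem_powerset] at hS ⊢
            exact Finset.sdiff_subset_sdiff hS.1 (le_refl _)
          · intro S1 hS1 S2 hS2 hconf
            simp only [Finset.mem_filter, Finset.mem_powerset] at hS1 hS2
            have := congrArg (fun X => X ∪ R) hconf
            simpa [Finset.sdiff_union_of_subset hS1.2, Finset.sdiff_union_of_subset hS2.2]
              using this
          · intro T hT
            have d1 : Disjoint T R := Finset.disjoint_of_subset_left
              (Finset.mem_powerset.1 hT) (Finset.sdiff_disjoint)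
            refine ⟨T ∪ R, ?_, ?_⟩
            · simp only [Finset.mem_filter, Finset.mem_powerset]
              exact ⟨Finset.subset_univ _, Finset.subset_union_right⟩
            · exact Finset.union_sdiff_cancel_right d1
          · intro S hS
            simp only [Finset.mem_filter, Finset.mem_powerset] at hS
            have : (S \ R).card + R.card = S.card :=
              Finset.card_sdiff_add_card_eq_card hS.2
            rw [this]
        rw [hfil]
        have hcardC : ((univ : Finset (Fin n)) \ R).card = n - R.card := by
          rw [Finset.card_sdiff_of_subset (Finset.subset_univ _)]
          simp
        have hsign : ∑ T ∈ ((univ : Finset (Fin n)) \ R).powerset,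
            (-1:ℂ)^(n - (T.card + R.card))
            = (if R = univ then 1 else 0) := by
          have hRle : R.card ≤ n := by simpa using Finset.card_le_univ R
          have e3 : ∀ T ∈ ((univ : Finset (Fin n)) \ R).powerset,
              (-1:ℂ)^(n - (T.card + R.card))
              = (-1:ℂ)^(n - R.card) * (-1:ℂ)^(T.card) := by
            intro T hT
            have hTle : T.card ≤ n - R.card := by
              rw [← hcardC]
              exact Finset.card_le_card (Finset.mem_powerset.1 hT)
            have : n - (T.card + R.card) = (n - R.card) - T.card := by omega
            rw [this, neg_one_pow_sub_c hTle]
          rw [Finset.sum_congr rfl e3, ← Finset.mul_sum]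
          have hz : (∑ T ∈ ((univ : Finset (Fin n)) \ R).powerset, (-1:ℤ)^(T.card))
              = if ((univ : Finset (Fin n)) \ R) = ∅ then 1 else 0 :=
            Finset.sum_powerset_neg_one_pow_card
          have hzc : (∑ T ∈ ((univ : Finset (Fin n)) \ R).powerset, (-1:ℂ)^(T.card))
              = if ((univ : Finset (Fin n)) \ R) = ∅ then 1 else 0 := by
            have := congrArg (Int.cast : ℤ → ℂ) hz
            push_cast at this
            rw [this]
          rw [hzc]
          have hiff2 : ((univ : Finset (Fin n)) \ R) = ∅ ↔ R = univ := by
            rw [Finset.sdiff_eq_empty_iff_subset]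
            exact ⟨fun h => le_antisymm (Finset.subset_univ _) h, fun h => h ▸ le_refl _⟩
          by_cases hRuniv : R = univ
          · rw [if_pos (hiff2.2 hRuniv), if_pos hRuniv, hRuniv]
            simp
          · rw [if_neg (fun hc => hRuniv (hiff2.1 hc)), if_neg hRuniv, mul_zero]
        rw [hsign]
        split <;> simp
    _ = ∑ r ∈ (univ : Finset (Fin n → Fin n)).filter (fun r => Finset.image r univ = univ),
          Φ (fun j => a (r j)) := by rw [Finset.sum_filter]
    _ = (n.factorial : ℂ) * Φ a := by
        have : ∑ r ∈ (univ : Finset (Fin n → Fin n)).filter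
              (fun r => Finset.image r univ = univ), Φ (fun j => a (r j))
            = ∑ σ : Equiv.Perm (Fin n), Φ (a ∘ σ) := by
          refine (Finset.sum_bij (fun (σ : Equiv.Perm (Fin n)) (_ : σ ∈ univ) =>
            (⇑σ : Fin n → Fin n)) ?_ ?_ ?_ ?_).symm
          · intro σ _
            simp only [Finset.mem_filter, Finset.mem_univ, true_and]
            ext x
            simp only [Finset.mem_image, Finset.mem_univ, true_and, iff_true]
            exact ⟨σ.symm x, σ.apply_symm_apply x⟩
          · intro σ1 _ σ2 _ hcoe
            exact Equiv.coe_fn_injective hcoe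
          · intro r hr
            simp only [Finset.mem_filter, Finset.mem_univ, true_and] at hr
            have hsurj : Function.Surjective r := by
              intro x
              have hx : x ∈ Finset.image r univ := by
                rw [hr]; exact Finset.mem_univ x
              simpa using hx
            have hbij : Function.Bijective r := Finite.surjective_iff_bijective.1 hsurj
            exact ⟨Equiv.ofBijective r hbij, Finset.mem_univ _, rfl⟩
          · intro σ _
            rfl
        rw [this, Finset.sum_congr rfl (fun σ _ => hs σ a), Finset.sum_const,
          Finset.card_univ, Fintype.card_perm, Fintype.card_fin, nsmul_eq_mul]

end Aux

/-- For `n ≥ 2`, every `μ ∈ 𝓜_n(A)` decomposes uniquely as `μ = ν + ι_n(Φ)` with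
`ν ∈ 𝓜_{n−1}(A)` and `Φ ∈ Σ_n(A)`; explicitly `Φ = Π_n(μ)` and
`ν = μ − ι_n(Π_n(μ))`.  This is the splitting of the short exact sequence
`0 → 𝓜_{n−1}(A) → 𝓜_n(A) → Σ_n(A) → 0` via `ι_n`. -/
theorem measureSpace_decomposition {A : Type*} [AddCommGroup A] [Module ℚ A]
    (n : ℕ) (hn : 2 ≤ n) (μ : A → ℂ) (hμ : MemMeasureSpace n μ) :
    (MemMeasureSpace (n - 1) (fun x : A => μ x - polarization μ (fun _ : Fin n => x)) ∧
      IsTotallySymmetric (fun a : Fin n → A => polarization μ a) ∧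
      IsMultiadditive (fun a : Fin n → A => polarization μ a)) ∧
    (∃! p : (A → ℂ) × ((Fin n → A) → ℂ),
      MemMeasureSpace (n - 1) p.1 ∧ IsTotallySymmetric p.2 ∧ IsMultiadditive p.2 ∧
      ∀ x : A, μ x = p.1 x + p.2 (fun _ => x)) := by
  classical
  obtain ⟨m, rfl⟩ : ∃ m, n = m + 2 := ⟨n - 2, by omega⟩
  have hμ0 : μ 0 = 0 := mem_zero hμ
  have hΔ : ∀ b : Fin (m + 3) → A, dd μ b = 0 := fun b => mem_dd hμ b
  have hpol : ∀ a : Fin (m + 2) → A,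
      polarization μ a = (((m + 2).factorial : ℂ))⁻¹ * dd μ a :=
    fun a => polarization_eq μ (k := m + 1) hΔ a
  have hmul : IsMultiadditive (fun a : Fin (m + 2) → A => dd μ a) :=
    dd_multiadd μ (k := m + 1) hΔ
  have hfact : (((m + 2).factorial : ℂ)) ≠ 0 := Nat.cast_ne_zero.2 (Nat.factorial_ne_zero _)
  have hsym : IsTotallySymmetric (fun a : Fin (m + 2) → A => polarization μ a) := by
    intro σ a
    simp only []
    rw [hpol, hpol, dd_perm]
  have hmadd : IsMultiadditive (fun a : Fin (m + 2) → A => polarization μ a) := by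
    intro i a x y
    simp only []
    rw [hpol, hpol, hpol]
    have h1 := hmul i a x y
    simp only [] at h1
    rw [h1]
    ring
  have hdiag : ∀ a : Fin (m + 2) → A,
      dd (fun x => polarization μ (fun _ : Fin (m + 2) => x)) a
        = ((m + 2).factorial : ℂ) * polarization μ a := by
    intro a
    exact dd_diag hsym hmadd a
  have hpolzero : polarization μ (fun _ : Fin (m + 2) => (0 : A)) = 0 := by
    rw [hpol, dd_const_zero μ (k := m + 1), mul_zero]
  have hνdd : ∀ a : Fin (m + 2) → A,
      dd (fun x => μ x - polarization μ (fun _ : Fin (m + 2) => x)) a = 0 := by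
    intro a
    rw [dd_sub, hdiag a, hpol a]
    field_simp
    ring
  have hmem : MemMeasureSpace (m + 1)
      (fun x : A => μ x - polarization μ (fun _ : Fin (m + 2) => x)) :=
    mem_of_dd (by show μ 0 - polarization μ (fun _ : Fin (m + 2) => (0:A)) = 0; rw [hμ0, hpolzero, sub_zero]) hνdd
  refine ⟨⟨hmem, hsym, hmadd⟩,
    ⟨(fun x : A => μ x - polarization μ (fun _ : Fin (m + 2) => x),
      fun a : Fin (m + 2) → A => polarization μ a),
      ⟨hmem, hsym, hmadd, fun x => by
        show μ x = μ x - polarization μ (fun _ : Fin (m + 2) => x)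
          + polarization μ (fun _ : Fin (m + 2) => x)
        ring⟩, ?_⟩⟩
  rintro ⟨ν', Φ'⟩ ⟨hν'm, hΦ's, hΦ'a, heq⟩
  have hΦ' : Φ' = fun a : Fin (m + 2) → A => polarization μ a := by
    funext a
    have hdd : dd μ a = dd ν' a + dd (fun x => Φ' (fun _ => x)) a := by
      rw [← dd_add]
      have hfun : μ = fun x => ν' x + Φ' (fun _ => x) := funext heq
      rw [← hfun]
    have h1 : dd ν' a = 0 := mem_dd (k := m + 1) hν'm a
    have h2 := dd_diag hΦ's hΦ'a a
    have h3 : dd μ a = ((m + 2).factorial : ℂ) * Φ' a := by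
      rw [hdd, h1, h2, zero_add]
    show Φ' a = polarization μ a
    rw [hpol a, h3]
    field_simp
  have hν' : ν' = fun x : A => μ x - polarization μ (fun _ : Fin (m + 2) => x) := by
    funext x
    have h4 : μ x = ν' x + polarization μ (fun _ : Fin (m + 2) => x) := by
      have := heq x
      rw [hΦ'] at this
      simpa using this
    linear_combination -h4
  exact Prod.ext hν' hΦ'
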